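/- arXiv:2305.11005 — 2 statements merged into one kernel-verified Lean document; each statement's English description precedes it below -/
import Mathlib

section
/- Let M1 = {(x^(k), β^(k))}_{k∈{0,...,K}} be a 0-reducible AMA menu with witness set K1 (0 ∈ K1, and with F-probability 1 both the selected boosted-welfare-maximizing option with minimal β and, for every buyer i, some maximizer of ∑_{ℓ≠i} v_ℓ⋅x_ℓ^(k) + β^(k) lie in K1). Let φ1 : {0,...,K} → K1 be any map with φ1(k) = k for all k ∈ K1, and define the menu M̂1 whose k-th option is (x^(φ1(k)), β^(φ1(k))). Then for every λ ∈ [0,1], the convex combination M = λ M1 + (1−λ) M̂1 satisfies Rev(M) ≥ Rev(M1). -/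
open MeasureTheory Finset

namespace AMA

/-- An AMA menu: for each of the `K+1` option indices, an allocation
`x : Fin m → Fin n → ℝ` (buyer `i` receives `x i j` of item `j`) and a boost `β : ℝ`. -/
abbrev Menu (m n K : ℕ) := Fin (K + 1) → (Fin m → Fin n → ℝ) × ℝ

/-- Inner product of a valuation and an allocation. -/
def dotp {n : ℕ} (v x : Fin n → ℝ) : ℝ := ∑ j, v j * x j

/-- A valid AMA menu: entries in `[0,1]`, each item allocated at most once in total,
default option `(0, 0)`. -/
def IsMenu {m n K : ℕ} (M : Menu m n K) : Prop :=
  (∀ k i j, 0 ≤ (M k).1 i j ∧ (M k).1 i j ≤ 1) ∧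
  (∀ k j, ∑ i, (M k).1 i j ≤ 1) ∧ M 0 = 0

/-- The set of valuation profiles: each buyer's valuation lies in `[0,1]^n` with
coordinate sum at most `1`. -/
def VP (m n : ℕ) : Set (Fin m → Fin n → ℝ) :=
  {v | ∀ i, (∀ j, 0 ≤ v i j ∧ v i j ≤ 1) ∧ ∑ j, v i j ≤ 1}

/-- Boosted welfare of option `k` at the valuation profile `v`. -/
def bw {m n K : ℕ} (M : Menu m n K) (v : Fin m → Fin n → ℝ) (k : Fin (K + 1)) : ℝ :=
  (∑ i, dotp (v i) ((M k).1 i)) + (M k).2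

/-- Boosted welfare of option `k` at `v` when buyer `i` is omitted. -/
def bwWo {m n K : ℕ} (M : Menu m n K) (v : Fin m → Fin n → ℝ) (i : Fin m)
    (k : Fin (K + 1)) : ℝ :=
  (∑ l ∈ Finset.univ.erase i, dotp (v l) ((M k).1 l)) + (M k).2

/-- Maximal boosted welfare `W(v)`. -/
noncomputable def W {m n K : ℕ} (M : Menu m n K) (v : Fin m → Fin n → ℝ) : ℝ :=
  Finset.univ.sup' Finset.univ_nonempty (bw M v)

/-- Maximal boosted welfare `W(v₋ᵢ)` with buyer `i` omitted. -/
noncomputable def WWo {m n K : ℕ} (M : Menu m n K) (v : Fin m → Fin n → ℝ)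
    (i : Fin m) : ℝ :=
  Finset.univ.sup' Finset.univ_nonempty (bwWo M v i)

/-- The minimal boost among boosted-welfare-maximizing options (tie-breaking in favor
of maximal total payment). -/
noncomputable def minBeta {m n K : ℕ} (M : Menu m n K) (v : Fin m → Fin n → ℝ) : ℝ :=
  sInf {b : ℝ | ∃ k, bw M v k = W M v ∧ b = (M k).2}

/-- Total payment collected at `v`:
`∑ i W(v₋ᵢ) − (m−1) W(v) − min {β k : W_k(v) = W(v)}`. -/
noncomputable def pay {m n K : ℕ} (M : Menu m n K) (v : Fin m → Fin n → ℝ) : ℝ :=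
  (∑ i, WWo M v i) - ((m : ℝ) - 1) * W M v - minBeta M v

/-- Expected revenue of the AMA menu `M` under the profile distribution `F`. -/
noncomputable def Rev {m n K : ℕ} (F : Measure (Fin m → Fin n → ℝ))
    (M : Menu m n K) : ℝ :=
  ∫ v, pay M v ∂F

/-- Option-wise convex combination of two AMA menus. -/
noncomputable def comb {m n K : ℕ} (lam : ℝ) (M M' : Menu m n K) : Menu m n K :=
  fun k => (fun i j => lam * (M k).1 i j + (1 - lam) * (M' k).1 i j,
            lam * (M k).2 + (1 - lam) * (M' k).2)

/-- The event that the option subset `K'` suffices at `v`: some boosted-welfare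
maximizer with minimal boost lies in `K'`, and for every buyer `i` some maximizer of the
boosted welfare of `v₋ᵢ` lies in `K'`. -/
def GoodEvent {m n K : ℕ} (M : Menu m n K) (K' : Finset (Fin (K + 1)))
    (v : Fin m → Fin n → ℝ) : Prop :=
  (∃ k ∈ K', bw M v k = W M v ∧ (M k).2 = minBeta M v) ∧
  ∀ i : Fin m, ∃ k ∈ K', bwWo M v i k = WWo M v i

/-- `M` is `ε`-reducible: some subset `K'` of options containing the default option, of
cardinality at most `√(K+1)`, whose good event has probability at least `1 - ε/m`. -/
def Reducible {m n K : ℕ} (F : Measure (Fin m → Fin n → ℝ)) (M : Menu m n K)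
    (ε : ℝ) : Prop :=
  ∃ K' : Finset (Fin (K + 1)), 0 ∈ K' ∧ (K'.card : ℝ) ≤ Real.sqrt (K + 1) ∧
    (F {v | GoodEvent M K' v}).toReal ≥ 1 - ε / (m : ℝ)

/-- `M₁` and `M₂` are `ε`-mode-connected by a piecewise linear path with `pieces`
linear pieces, all whose menus are valid AMA menus and have revenue at least
`min (Rev M₁) (Rev M₂) - ε`. -/
def PLConnected {m n K : ℕ} (F : Measure (Fin m → Fin n → ℝ)) (M₁ M₂ : Menu m n K)
    (ε : ℝ) (pieces : ℕ) : Prop :=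
  ∃ P : Fin (pieces + 1) → Menu m n K, P 0 = M₁ ∧ P (Fin.last pieces) = M₂ ∧
    (∀ i, IsMenu (P i)) ∧
    ∀ i : Fin pieces, ∀ lam ∈ Set.Icc (0 : ℝ) 1,
      Rev F (comb lam (P i.castSucc) (P i.succ)) ≥ min (Rev F M₁) (Rev F M₂) - ε

lemma dotp_convex {n : ℕ} (lam : ℝ) (v a b : Fin n → ℝ) :
    dotp v (fun j => lam * a j + (1 - lam) * b j) = lam * dotp v a + (1 - lam) * dotp v b := by
  simp only [dotp, Finset.mul_sum]
  rw [← Finset.sum_add_distrib]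
  exact Finset.sum_congr rfl fun j _ => by ring

lemma bw_comb {m n K : ℕ} (lam : ℝ) (M M' : Menu m n K) (v : Fin m → Fin n → ℝ)
    (k : Fin (K + 1)) :
    bw (comb lam M M') v k = lam * bw M v k + (1 - lam) * bw M' v k := by
  simp only [bw, comb]
  rw [Finset.sum_congr rfl fun i _ => dotp_convex lam (v i) ((M k).1 i) ((M' k).1 i),
    Finset.sum_add_distrib, ← Finset.mul_sum, ← Finset.mul_sum]
  ring

lemma bwWo_comb {m n K : ℕ} (lam : ℝ) (M M' : Menu m n K) (v : Fin m → Fin n → ℝ)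
    (i : Fin m) (k : Fin (K + 1)) :
    bwWo (comb lam M M') v i k = lam * bwWo M v i k + (1 - lam) * bwWo M' v i k := by
  simp only [bwWo, comb]
  rw [Finset.sum_congr rfl fun l _ => dotp_convex lam (v l) ((M k).1 l) ((M' k).1 l),
    Finset.sum_add_distrib, ← Finset.mul_sum, ← Finset.mul_sum]
  ring

lemma measurable_bw {m n K : ℕ} (M : Menu m n K) (k : Fin (K + 1)) :
    Measurable (fun v : Fin m → Fin n → ℝ => bw M v k) := by
  unfold bw dotp
  apply Measurable.add _ measurable_const
  apply Finset.measurable_sum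
  intro i _
  apply Finset.measurable_sum
  intro j _
  exact ((measurable_pi_apply j).comp (measurable_pi_apply i)).mul_const _

lemma measurable_bwWo {m n K : ℕ} (M : Menu m n K) (i : Fin m) (k : Fin (K + 1)) :
    Measurable (fun v : Fin m → Fin n → ℝ => bwWo M v i k) := by
  unfold bwWo dotp
  apply Measurable.add _ measurable_const
  apply Finset.measurable_sum
  intro l _
  apply Finset.measurable_sum
  intro j _
  exact ((measurable_pi_apply j).comp (measurable_pi_apply l)).mul_const _

lemma measurable_W {m n K : ℕ} (M : Menu m n K) :
    Measurable (fun v : Fin m → Fin n → ℝ => W M v) := by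
  have : (fun v : Fin m → Fin n → ℝ => W M v)
      = Finset.univ.sup' Finset.univ_nonempty (fun k v => bw M v k) := by
    funext v
    rw [Finset.sup'_apply]
    rfl
  rw [this]
  exact Finset.measurable_sup' _ fun k _ => measurable_bw M k

lemma measurable_WWo {m n K : ℕ} (M : Menu m n K) (i : Fin m) :
    Measurable (fun v : Fin m → Fin n → ℝ => WWo M v i) := by
  have : (fun v : Fin m → Fin n → ℝ => WWo M v i)
      = Finset.univ.sup' Finset.univ_nonempty (fun k v => bwWo M v i k) := by
    funext v
    rw [Finset.sup'_apply]
    rfl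
  rw [this]
  exact Finset.measurable_sup' _ fun k _ => measurable_bwWo M i k

/-- The argmax-boost set is bounded below. -/
lemma bddBelow_betaSet {m n K : ℕ} (M : Menu m n K) (v : Fin m → Fin n → ℝ) :
    BddBelow {b : ℝ | ∃ k, bw M v k = W M v ∧ b = (M k).2} := by
  apply Set.Finite.bddBelow
  apply Set.Finite.subset (Set.finite_range fun k : Fin (K + 1) => (M k).2)
  rintro b ⟨k, _, rfl⟩
  exact ⟨k, rfl⟩

lemma minBeta_le {m n K : ℕ} (M : Menu m n K) (v : Fin m → Fin n → ℝ)
    {k : Fin (K + 1)} (hk : bw M v k = W M v) : minBeta M v ≤ (M k).2 :=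
  csInf_le (bddBelow_betaSet M v) ⟨k, hk, rfl⟩

/-- Characterization of having minimal boost among maximizers. -/
lemma minBeta_eq_iff {m n K : ℕ} (M : Menu m n K) (v : Fin m → Fin n → ℝ)
    {k : Fin (K + 1)} (hk : bw M v k = W M v) :
    (M k).2 = minBeta M v ↔ ∀ k', bw M v k' = W M v → (M k).2 ≤ (M k').2 := by
  have hne : {b : ℝ | ∃ k, bw M v k = W M v ∧ b = (M k).2}.Nonempty :=
    ⟨(M k).2, k, hk, rfl⟩
  constructor
  · intro h k' hk'
    exact h ▸ minBeta_le M v hk'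
  · intro h
    refine le_antisymm ?_ (minBeta_le M v hk)
    apply le_csInf hne
    rintro b ⟨k', hk', rfl⟩
    exact h k' hk'

/-- Let `M₁` be a `0`-reducible AMA menu with witness set `K₁`
(containing the default option, and with probability `1` the good event for `K₁`
holds).  Let `φ₁ : {0,…,K} → K₁` be any map fixing `K₁` pointwise, and let `M̂₁` be the
menu whose `k`-th option is the `φ₁ k`-th option of `M₁`.  Then every convex
combination of `M₁` and `M̂₁` has revenue at least `Rev M₁`. -/
theorem statement12 {m n K : ℕ} (hm : 0 < m) (F : Measure (Fin m → Fin n → ℝ))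
    [IsProbabilityMeasure F] (hFV : F (VP m n) = 1)
    (M₁ : Menu m n K) (hM₁ : IsMenu M₁)
    (K₁ : Finset (Fin (K + 1))) (h0 : 0 ∈ K₁)
    (hgood : F {v | GoodEvent M₁ K₁ v} = 1)
    (φ₁ : Fin (K + 1) → Fin (K + 1)) (hφmem : ∀ k, φ₁ k ∈ K₁)
    (hφid : ∀ k ∈ K₁, φ₁ k = k) :
    ∀ lam ∈ Set.Icc (0 : ℝ) 1,
      Rev F (comb lam M₁ (fun k => M₁ (φ₁ k))) ≥ Rev F M₁ := by
  rintro lam ⟨hl0, hl1⟩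
  set M₂ : Menu m n K := fun k => M₁ (φ₁ k) with hM₂
  set M : Menu m n K := comb lam M₁ M₂ with hM
  -- Rewrite the good event as a measurable set.
  have hGE : {v | GoodEvent M₁ K₁ v}
      = {v | (∃ k ∈ K₁, bw M₁ v k = W M₁ v ∧
          ∀ k', bw M₁ v k' = W M₁ v → (M₁ k).2 ≤ (M₁ k').2) ∧
          ∀ i, ∃ k ∈ K₁, bwWo M₁ v i k = WWo M₁ v i} := by
    ext v
    simp only [GoodEvent, Set.mem_setOf_eq]
    refine and_congr ?_ Iff.rfl
    constructor
    · rintro ⟨k, hkK, hbw, hβ⟩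
      exact ⟨k, hkK, hbw, (minBeta_eq_iff M₁ v hbw).1 hβ⟩
    · rintro ⟨k, hkK, hbw, hβ⟩
      exact ⟨k, hkK, hbw, (minBeta_eq_iff M₁ v hbw).2 hβ⟩
  have hmeasG : MeasurableSet {v | GoodEvent M₁ K₁ v} := by
    have heq : ∀ (k : Fin (K + 1)),
        MeasurableSet {v : Fin m → Fin n → ℝ | bw M₁ v k = W M₁ v} := fun k =>
      measurableSet_eq_fun (measurable_bw M₁ k) (measurable_W M₁)
    have hs1 : MeasurableSet {v : Fin m → Fin n → ℝ | ∃ k ∈ K₁, bw M₁ v k = W M₁ v ∧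
        ∀ k', bw M₁ v k' = W M₁ v → (M₁ k).2 ≤ (M₁ k').2} := by
      have he : {v : Fin m → Fin n → ℝ | ∃ k ∈ K₁, bw M₁ v k = W M₁ v ∧
          ∀ k', bw M₁ v k' = W M₁ v → (M₁ k).2 ≤ (M₁ k').2}
          = ⋃ k ∈ K₁, ({v | bw M₁ v k = W M₁ v} ∩
              ⋂ k', {v | bw M₁ v k' = W M₁ v → (M₁ k).2 ≤ (M₁ k').2}) := by
        ext v
        simp only [Set.mem_setOf_eq, Set.mem_iUnion, Set.mem_inter_iff, Set.mem_iInter,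
          exists_prop]
      rw [he]
      refine MeasurableSet.biUnion K₁.countable_toSet fun k _ => (heq k).inter ?_
      refine MeasurableSet.iInter fun k' => ?_
      by_cases h : (M₁ k).2 ≤ (M₁ k').2
      · exact MeasurableSet.univ.congr (by ext v; simp [h])
      · have he2 : {v : Fin m → Fin n → ℝ | bw M₁ v k' = W M₁ v → (M₁ k).2 ≤ (M₁ k').2}
            = {v | bw M₁ v k' = W M₁ v}ᶜ := by
          ext v; simp [h]
        rw [he2]
        exact (heq k').compl
    have hs2 : MeasurableSet {v : Fin m → Fin n → ℝ |
        ∀ i, ∃ k ∈ K₁, bwWo M₁ v i k = WWo M₁ v i} := by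
      have he : {v : Fin m → Fin n → ℝ | ∀ i, ∃ k ∈ K₁, bwWo M₁ v i k = WWo M₁ v i}
          = ⋂ i, ⋃ k ∈ K₁, {v | bwWo M₁ v i k = WWo M₁ v i} := by
        ext v
        simp only [Set.mem_setOf_eq, Set.mem_iUnion, Set.mem_iInter, exists_prop]
      rw [he]
      refine MeasurableSet.iInter fun i => ?_
      refine MeasurableSet.biUnion K₁.countable_toSet fun k _ => ?_
      exact measurableSet_eq_fun (measurable_bwWo M₁ i k) (measurable_WWo M₁ i)
    rw [hGE]
    exact hs1.inter hs2
  -- the good event holds a.e.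
  have hae : ∀ᵐ v ∂F, GoodEvent M₁ K₁ v := by
    rw [MeasureTheory.ae_iff]
    have : {v | ¬ GoodEvent M₁ K₁ v} = {v | GoodEvent M₁ K₁ v}ᶜ := rfl
    rw [this, prob_compl_eq_zero_iff hmeasG]
    exact hgood
  -- pointwise payment equality on the good event
  have hpay : ∀ v, GoodEvent M₁ K₁ v → pay M v = pay M₁ v := by
    intro v hv
    obtain ⟨⟨k₀, hk₀K, hbwk₀, hβk₀⟩, hWo⟩ := hv
    have hbwle : ∀ k, bw M₁ v k ≤ W M₁ v := fun k => Finset.le_sup' _ (Finset.mem_univ k)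
    have hMk : ∀ k, bw M v k = lam * bw M₁ v k + (1 - lam) * bw M₁ v (φ₁ k) := fun k =>
      bw_comb lam M₁ M₂ v k
    -- W M v = W M₁ v
    have hW : W M v = W M₁ v := by
      apply le_antisymm
      · apply Finset.sup'_le
        intro k _
        rw [hMk k]
        nlinarith [hbwle k, hbwle (φ₁ k)]
      · have : bw M v k₀ = W M₁ v := by
          rw [hMk k₀, hφid k₀ hk₀K, hbwk₀]; ring
        rw [← this]
        exact Finset.le_sup' _ (Finset.mem_univ k₀)
    -- WWo M v i = WWo M₁ v i for each i
    have hWWo : ∀ i, WWo M v i = WWo M₁ v i := by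
      intro i
      obtain ⟨k₁, hk₁K, hbwk₁⟩ := hWo i
      have hble : ∀ k, bwWo M₁ v i k ≤ WWo M₁ v i := fun k =>
        Finset.le_sup' _ (Finset.mem_univ k)
      apply le_antisymm
      · apply Finset.sup'_le
        intro k _
        rw [bwWo_comb lam M₁ M₂ v i k]
        nlinarith [hble k, show bwWo M₂ v i k ≤ WWo M₁ v i from hble (φ₁ k)]
      · have : bwWo M v i k₁ = WWo M₁ v i := by
          rw [bwWo_comb lam M₁ M₂ v i k₁,
            show bwWo M₂ v i k₁ = bwWo M₁ v i (φ₁ k₁) from rfl, hφid k₁ hk₁K, hbwk₁]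
          ring
        rw [← this]
        exact Finset.le_sup' _ (Finset.mem_univ k₁)
    -- minBeta M v = minBeta M₁ v
    have hbwMk₀ : bw M v k₀ = W M v := by
      rw [hW, hMk k₀, hφid k₀ hk₀K, hbwk₀]; ring
    have hβMk₀ : (M k₀).2 = minBeta M₁ v := by
      have : (M k₀).2 = lam * (M₁ k₀).2 + (1 - lam) * (M₁ (φ₁ k₀)).2 := rfl
      rw [this, hφid k₀ hk₀K, hβk₀]; ring
    have hmb : minBeta M v = minBeta M₁ v := by
      apply le_antisymm
      · rw [← hβMk₀]
        exact minBeta_le M v hbwMk₀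
      · apply le_csInf ⟨(M k₀).2, Set.mem_setOf_eq ▸ ⟨k₀, hbwMk₀, rfl⟩⟩
        rintro b ⟨k, hk, rfl⟩
        have hkeq : lam * bw M₁ v k + (1 - lam) * bw M₁ v (φ₁ k) = W M₁ v := by
          rw [← hMk k, hk, hW]
        have h1 : lam * minBeta M₁ v ≤ lam * (M₁ k).2 := by
          rcases eq_or_lt_of_le hl0 with h | h
          · rw [← h]; simp
          · have : bw M₁ v k = W M₁ v := by
              nlinarith [hbwle k, hbwle (φ₁ k)]
            exact mul_le_mul_of_nonneg_left (minBeta_le M₁ v this) hl0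
        have h2 : (1 - lam) * minBeta M₁ v ≤ (1 - lam) * (M₁ (φ₁ k)).2 := by
          rcases eq_or_lt_of_le hl1 with h | h
          · rw [h]; simp
          · have : bw M₁ v (φ₁ k) = W M₁ v := by
              nlinarith [hbwle k, hbwle (φ₁ k)]
            exact mul_le_mul_of_nonneg_left (minBeta_le M₁ v this) (by linarith)
        have : (M k).2 = lam * (M₁ k).2 + (1 - lam) * (M₁ (φ₁ k)).2 := rfl
        rw [this]
        linarith
    unfold pay
    rw [hW, hmb]
    congr 1
    congr 1
    exact Finset.sum_congr rfl fun i _ => hWWo i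
  -- conclude
  have : Rev F M = Rev F M₁ := by
    apply integral_congr_ae
    filter_upwards [hae] with v hv
    exact hpay v hv
  rw [this]

end AMA
end

section
/- Let 0 < ε ≤ 1/4 and let M1 be an AMA menu indexed by {0,...,K} with K+1 ≥ ⌈16m³/ε²⌉^{2nm} options. Then there exists a 0-reducible AMA menu M̃1 on the same index set such that for every λ ∈ [0,1], the convex combination M = λ M1 + (1−λ) M̃1 satisfies Rev(M) ≥ Rev(M1) − ε. -/
open MeasureTheory Finset

namespace AMA

section Aux

variable {m n K : ℕ}

lemma aux_le_W (M : Menu m n K) (v : Fin m → Fin n → ℝ) (k : Fin (K+1)) :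
    bw M v k ≤ W M v :=
  Finset.le_sup' _ (Finset.mem_univ k)

lemma aux_le_WWo (M : Menu m n K) (v : Fin m → Fin n → ℝ) (i : Fin m) (k : Fin (K+1)) :
    bwWo M v i k ≤ WWo M v i :=
  Finset.le_sup' _ (Finset.mem_univ k)

lemma aux_exists_W (M : Menu m n K) (v : Fin m → Fin n → ℝ) :
    ∃ k, bw M v k = W M v := by
  obtain ⟨k, -, hk⟩ := Finset.exists_mem_eq_sup' (Finset.univ_nonempty) (bw M v)
  exact ⟨k, hk.symm⟩

lemma aux_exists_WWo (M : Menu m n K) (v : Fin m → Fin n → ℝ) (i : Fin m) :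
    ∃ k, bwWo M v i k = WWo M v i := by
  obtain ⟨k, -, hk⟩ := Finset.exists_mem_eq_sup' (Finset.univ_nonempty) (bwWo M v i)
  exact ⟨k, hk.symm⟩

lemma aux_minBeta_set (M : Menu m n K) (v : Fin m → Fin n → ℝ) :
    {b : ℝ | ∃ k, bw M v k = W M v ∧ b = (M k).2} =
      ↑((Finset.univ.filter (fun k => bw M v k = W M v)).image (fun k => (M k).2)) := by
  ext b
  simp only [Set.mem_setOf_eq, Finset.coe_image, Set.mem_image, Finset.mem_coe,
    Finset.mem_filter, Finset.mem_univ, true_and]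
  constructor
  · rintro ⟨k, h1, h2⟩; exact ⟨k, h1, h2.symm⟩
  · rintro ⟨k, h1, h2⟩; exact ⟨k, h1, h2.symm⟩

lemma aux_minBeta_spec (M : Menu m n K) (v : Fin m → Fin n → ℝ) :
    ∃ k, bw M v k = W M v ∧ (M k).2 = minBeta M v := by
  classical
  obtain ⟨k0, hk0⟩ := aux_exists_W M v
  set A := (Finset.univ.filter (fun k => bw M v k = W M v)) with hA
  have hAne : A.Nonempty := ⟨k0, by simp [hA, hk0]⟩
  have hBne : (A.image (fun k => (M k).2)).Nonempty := hAne.image _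
  have h1 : minBeta M v = (A.image (fun k => (M k).2)).min' hBne := by
    rw [minBeta, aux_minBeta_set M v, ← hA, hBne.csInf_eq_min']
  obtain ⟨k, hkA, hkmin⟩ := Finset.mem_image.mp ((A.image (fun k => (M k).2)).min'_mem hBne)
  refine ⟨k, (Finset.mem_filter.mp hkA).2, ?_⟩
  rw [h1, hkmin]

lemma aux_minBeta_le (M : Menu m n K) (v : Fin m → Fin n → ℝ) (k : Fin (K+1))
    (h : bw M v k = W M v) : minBeta M v ≤ (M k).2 := by
  classical
  have hfin : ({b : ℝ | ∃ k, bw M v k = W M v ∧ b = (M k).2}).Finite := by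
    rw [aux_minBeta_set]; exact Finset.finite_toSet _
  exact csInf_le hfin.bddBelow ⟨k, h, rfl⟩

lemma aux_pay_eq (M : Menu m n K) (v : Fin m → Fin n → ℝ) :
    pay M v = (∑ i, (WWo M v i - W M v)) + (W M v - minBeta M v) := by
  rw [pay, Finset.sum_sub_distrib, Finset.sum_const, Finset.card_univ, Fintype.card_fin]
  ring

end Aux
section Meas

variable {m n K : ℕ}

private lemma aux_cont_sup' {ι : Type*} (s : Finset ι) (hs : s.Nonempty)
    (f : ι → (Fin m → Fin n → ℝ) → ℝ) (hf : ∀ i, Continuous (f i)) :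
    Continuous fun v => s.sup' hs (fun i => f i v) := by
  classical
  induction hs using Finset.Nonempty.cons_induction with
  | singleton a => simpa using hf a
  | cons a s ha hs ih =>
      have : (fun v => (Finset.cons a s ha).sup' (Finset.cons_nonempty ha) (fun i => f i v))
          = fun v => max (f a v) (s.sup' hs fun i => f i v) := by
        funext v; rw [Finset.sup'_cons]
      rw [this]
      exact (hf a).max ih

private lemma aux_meas_inf' {ι : Type*} (s : Finset ι) (hs : s.Nonempty)
    (f : ι → (Fin m → Fin n → ℝ) → ℝ) (hf : ∀ i, Measurable (f i)) :
    Measurable fun v => s.inf' hs (fun i => f i v) := by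
  classical
  induction hs using Finset.Nonempty.cons_induction with
  | singleton a => simpa using hf a
  | cons a s ha hs ih =>
      have : (fun v => (Finset.cons a s ha).inf' (Finset.cons_nonempty ha) (fun i => f i v))
          = fun v => min (f a v) (s.inf' hs fun i => f i v) := by
        funext v; rw [Finset.inf'_cons]
      rw [this]
      exact (hf a).min ih

lemma aux_cont_bw (M : Menu m n K) (k : Fin (K+1)) :
    Continuous fun v => bw M v k := by
  unfold bw dotp
  apply Continuous.add _ continuous_const
  apply continuous_finset_sum
  intro i _
  apply continuous_finset_sum
  intro j _
  exact (by fun_prop : Continuous fun v : Fin m → Fin n → ℝ => v i j).mul continuous_const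

lemma aux_cont_bwWo (M : Menu m n K) (i : Fin m) (k : Fin (K+1)) :
    Continuous fun v => bwWo M v i k := by
  unfold bwWo dotp
  apply Continuous.add _ continuous_const
  apply continuous_finset_sum
  intro l _
  apply continuous_finset_sum
  intro j _
  exact (by fun_prop : Continuous fun v : Fin m → Fin n → ℝ => v l j).mul continuous_const

lemma aux_cont_W (M : Menu m n K) : Continuous (W M) :=
  aux_cont_sup' _ _ _ (fun k => aux_cont_bw M k)

lemma aux_cont_WWo (M : Menu m n K) (i : Fin m) : Continuous fun v => WWo M v i :=
  aux_cont_sup' _ _ _ (fun k => aux_cont_bwWo M i k)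

lemma aux_meas_minBeta (M : Menu m n K) : Measurable (minBeta M) := by
  classical
  have hEq : minBeta M = fun v => Finset.univ.inf' Finset.univ_nonempty
      (fun k => if bw M v k = W M v then (M k).2
                else Finset.univ.sup' Finset.univ_nonempty (fun l => (M l).2)) := by
    funext v
    set Bmax := Finset.univ.sup' (Finset.univ_nonempty (α := Fin (K+1))) (fun l => (M l).2) with hB
    obtain ⟨kb, hkb1, hkb2⟩ := aux_minBeta_spec M v
    apply le_antisymm
    · obtain ⟨k0, -, hk0⟩ := Finset.exists_mem_eq_inf' (Finset.univ_nonempty)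
        (fun k => if bw M v k = W M v then (M k).2 else Bmax)
      rw [hk0]
      by_cases h : bw M v k0 = W M v
      · simp only [h, if_true]
        exact aux_minBeta_le M v k0 h
      · simp only [h, if_false]
        rw [← hkb2]
        exact Finset.le_sup' (fun l => (M l).2) (Finset.mem_univ kb)
    · refine le_trans (Finset.inf'_le _ (Finset.mem_univ kb)) ?_
      simp only [hkb1, if_true]
      rw [hkb2]
  rw [hEq]
  apply aux_meas_inf'
  intro k
  apply Measurable.ite _ measurable_const measurable_const
  exact measurableSet_eq_fun (aux_cont_bw M k).measurable (aux_cont_W M).measurable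

lemma aux_meas_pay (M : Menu m n K) : Measurable (pay M) := by
  unfold pay
  apply Measurable.sub
  apply Measurable.sub
  · exact Finset.measurable_sum _ (fun i _ => (aux_cont_WWo M i).measurable)
  · exact ((aux_cont_W M).measurable).const_mul _
  · exact aux_meas_minBeta M

end Meas
section Bounds

variable {m n K : ℕ}

lemma aux_welf_nonneg (M : Menu m n K) (hM : IsMenu M) (v : Fin m → Fin n → ℝ)
    (hv : v ∈ VP m n) (k : Fin (K+1)) (s : Finset (Fin m)) :
    0 ≤ ∑ i ∈ s, dotp (v i) ((M k).1 i) := by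
  apply Finset.sum_nonneg
  intro i _
  apply Finset.sum_nonneg
  intro j _
  exact mul_nonneg ((hv i).1 j).1 (hM.1 k i j).1

lemma aux_welf_le (M : Menu m n K) (hM : IsMenu M) (v : Fin m → Fin n → ℝ)
    (hv : v ∈ VP m n) (k : Fin (K+1)) (s : Finset (Fin m)) :
    ∑ i ∈ s, dotp (v i) ((M k).1 i) ≤ m := by
  have h1 : ∀ i, dotp (v i) ((M k).1 i) ≤ 1 := by
    intro i
    calc dotp (v i) ((M k).1 i) ≤ ∑ j, v i j := by
          apply Finset.sum_le_sum
          intro j _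
          exact mul_le_of_le_one_right ((hv i).1 j).1 (hM.1 k i j).2
      _ ≤ 1 := (hv i).2
  calc ∑ i ∈ s, dotp (v i) ((M k).1 i) ≤ ∑ _i ∈ s, (1:ℝ) :=
        Finset.sum_le_sum (fun i _ => h1 i)
    _ = s.card := by simp
    _ ≤ m := by
        have := Finset.card_le_card (Finset.subset_univ s)
        simpa using (Nat.cast_le (α := ℝ)).mpr this

lemma aux_pay_bound (M : Menu m n K) (hM : IsMenu M) :
    ∃ C : ℝ, ∀ v ∈ VP m n, |pay M v| ≤ C := by
  classical
  set B := Finset.univ.sup' (Finset.univ_nonempty (α := Fin (K+1)))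
      (fun k => |(M k).2|) with hBdef
  have hBk : ∀ k, |(M k).2| ≤ B := by
    intro k; rw [hBdef]; exact Finset.le_sup' (fun k => |(M k).2|) (Finset.mem_univ k)
  have hB0 : 0 ≤ B := le_trans (abs_nonneg _) (hBk 0)
  refine ⟨(m:ℝ)*(m+B) + ((m:ℝ)+1)*(m+B) + B, ?_⟩
  intro v hv
  have hbw_ub : ∀ k, bw M v k ≤ m + B := by
    intro k
    have := aux_welf_le M hM v hv k Finset.univ
    have h2 : (M k).2 ≤ B := le_trans (le_abs_self _) (hBk k)
    unfold bw; linarith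
  have hbw_lb : ∀ k, -B ≤ bw M v k := by
    intro k
    have := aux_welf_nonneg M hM v hv k Finset.univ
    have h2 : -B ≤ (M k).2 := le_trans (neg_le_neg (hBk k)) (neg_abs_le _)
    unfold bw; linarith
  have hbwWo_ub : ∀ i k, bwWo M v i k ≤ m + B := by
    intro i k
    have := aux_welf_le M hM v hv k (Finset.univ.erase i)
    have h2 : (M k).2 ≤ B := le_trans (le_abs_self _) (hBk k)
    unfold bwWo; linarith
  have hbwWo_lb : ∀ i k, -B ≤ bwWo M v i k := by
    intro i k
    have := aux_welf_nonneg M hM v hv k (Finset.univ.erase i)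
    have h2 : -B ≤ (M k).2 := le_trans (neg_le_neg (hBk k)) (neg_abs_le _)
    unfold bwWo; linarith
  have hW_ub : W M v ≤ m + B := Finset.sup'_le _ _ (fun k _ => hbw_ub k)
  have hW_lb : -B ≤ W M v := le_trans (hbw_lb 0) (aux_le_W M v 0)
  have hWWo_ub : ∀ i, WWo M v i ≤ m + B :=
    fun i => Finset.sup'_le _ _ (fun k _ => hbwWo_ub i k)
  have hWWo_lb : ∀ i, -B ≤ WWo M v i :=
    fun i => le_trans (hbwWo_lb i 0) (aux_le_WWo M v i 0)
  have hmb : |minBeta M v| ≤ B := by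
    obtain ⟨k, -, hk2⟩ := aux_minBeta_spec M v
    rw [← hk2]; exact hBk k
  have hsum_ub : ∑ i, WWo M v i ≤ m * (m + B) := by
    calc ∑ i, WWo M v i ≤ ∑ _i : Fin m, (m + B) := Finset.sum_le_sum (fun i _ => hWWo_ub i)
      _ = m * (m + B) := by simp [Finset.sum_const]; try ring
  have hsum_lb : -(m * (m + B)) ≤ ∑ i, WWo M v i := by
    have : ∑ _i : Fin m, (-B) ≤ ∑ i, WWo M v i := Finset.sum_le_sum (fun i _ => hWWo_lb i)
    have h2 : ((m:ℝ)) * (-B) = ∑ _i : Fin m, (-B) := by simp [Finset.sum_const]; try ring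
    nlinarith [Nat.cast_nonneg (α := ℝ) m]
  have hWabs : |W M v| ≤ m + B := by
    rw [abs_le]; constructor
    · linarith [Nat.cast_nonneg (α := ℝ) m]
    · exact hW_ub
  have h2 : |((m:ℝ) - 1) * W M v| ≤ ((m:ℝ)+1)*(m+B) := by
    have hc := Nat.cast_nonneg (α := ℝ) m
    have habs1 : |(m:ℝ) - 1| ≤ (m:ℝ)+1 := abs_le.mpr ⟨by linarith, by linarith⟩
    rw [abs_mul]
    exact mul_le_mul habs1 hWabs (abs_nonneg _) (by positivity)
  have h1 : |∑ i, WWo M v i| ≤ m * (m + B) := abs_le.mpr ⟨hsum_lb, hsum_ub⟩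
  unfold pay
  have e1 := abs_le.mp h1
  have e2 := abs_le.mp h2
  have e3 := abs_le.mp hmb
  rw [abs_le]
  constructor <;> [linarith [e1.1, e2.2, e3.2]; linarith [e1.2, e2.1, e3.1]]

lemma aux_measurableSet_VP : MeasurableSet (VP m n) := by
  have hco : ∀ (i : Fin m) (j : Fin n), Measurable fun (v : Fin m → Fin n → ℝ) => v i j :=
    fun i j => (measurable_pi_apply j).comp (measurable_pi_apply i)
  have : VP m n = ⋂ i, ((⋂ j, ({v : Fin m → Fin n → ℝ | 0 ≤ v i j} ∩ {v | v i j ≤ 1}))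
      ∩ {v | ∑ j, v i j ≤ 1}) := by
    ext v
    simp only [VP, Set.mem_setOf_eq, Set.mem_iInter, Set.mem_inter_iff]
  rw [this]
  apply MeasurableSet.iInter
  intro i
  apply MeasurableSet.inter
  · apply MeasurableSet.iInter
    intro j
    exact (measurableSet_le measurable_const (hco i j)).inter
      (measurableSet_le (hco i j) measurable_const)
  · exact measurableSet_le (Finset.measurable_sum _ (fun j _ => hco i j)) measurable_const

lemma aux_ae_VP (F : Measure (Fin m → Fin n → ℝ)) [IsProbabilityMeasure F]
    (hFV : F (VP m n) = 1) : ∀ᵐ v ∂F, v ∈ VP m n := by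
  rw [MeasureTheory.ae_iff]
  have : {v : Fin m → Fin n → ℝ | ¬ v ∈ VP m n} = (VP m n)ᶜ := rfl
  rw [this, measure_compl aux_measurableSet_VP (by simp), hFV]
  simp

lemma aux_integrable_pay (F : Measure (Fin m → Fin n → ℝ)) [IsProbabilityMeasure F]
    (hFV : F (VP m n) = 1) (M : Menu m n K) (hM : IsMenu M) :
    MeasureTheory.Integrable (pay M) F := by
  obtain ⟨C, hC⟩ := aux_pay_bound M hM
  apply MeasureTheory.Integrable.mono' (MeasureTheory.integrable_const C)
    (aux_meas_pay M).aestronglyMeasurable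
  filter_upwards [aux_ae_VP F hFV] with v hv
  simpa using hC v hv

end Bounds
section Constr

variable {m n K : ℕ}

lemma aux_pay_n0 {m K : ℕ} (M : Menu m 0 K) (v : Fin m → Fin 0 → ℝ) : pay M v = 0 := by
  have hbw : ∀ k, bw M v k = (M k).2 := by
    intro k; unfold bw dotp; simp
  have hbwWo : ∀ i k, bwWo M v i k = (M k).2 := by
    intro i k; unfold bwWo dotp; simp
  have hW : W M v = Finset.univ.sup' Finset.univ_nonempty (fun k => (M k).2) :=
    Finset.sup'_congr _ rfl (fun k _ => hbw k)
  have hWWo : ∀ i, WWo M v i = W M v := by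
    intro i
    rw [hW]
    exact Finset.sup'_congr _ rfl (fun k _ => hbwWo i k)
  have hmb : minBeta M v = W M v := by
    obtain ⟨k, hk1, hk2⟩ := aux_minBeta_spec M v
    rw [← hk2, ← hk1, hbw]
  unfold pay
  rw [hmb, Finset.sum_congr rfl (fun i _ => hWWo i), Finset.sum_const, Finset.card_univ,
    Fintype.card_fin]
  push_cast
  ring

lemma aux_comb_isMenu (lam : ℝ) (h0 : 0 ≤ lam) (h1 : lam ≤ 1) (M M' : Menu m n K)
    (hM : IsMenu M) (hM' : IsMenu M') : IsMenu (comb lam M M') := by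
  refine ⟨?_, ?_, ?_⟩
  · intro k i j
    have a := hM.1 k i j; have b := hM'.1 k i j
    constructor
    · have := mul_nonneg h0 a.1
      have := mul_nonneg (by linarith : (0:ℝ) ≤ 1 - lam) b.1
      simp only [comb]; linarith
    · simp only [comb]
      nlinarith [a.2, b.2]
  · intro k j
    simp only [comb]
    rw [Finset.sum_add_distrib]
    have e1 : ∑ i, lam * (M k).1 i j ≤ lam * 1 := by
      rw [← Finset.mul_sum]
      exact mul_le_mul_of_nonneg_left (hM.2.1 k j) h0
    have e2 : ∑ i, (1 - lam) * (M' k).1 i j ≤ (1 - lam) * 1 := by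
      rw [← Finset.mul_sum]
      exact mul_le_mul_of_nonneg_left (hM'.2.1 k j) (by linarith)
    linarith
  · have h := hM.2.2; have h' := hM'.2.2
    show (fun i j => lam * (M 0).1 i j + (1 - lam) * (M' 0).1 i j,
      lam * (M 0).2 + (1 - lam) * (M' 0).2) = 0
    rw [h, h']
    refine Prod.ext ?_ ?_
    · funext i j; show lam * (0:(Fin m → Fin n → ℝ) × ℝ).1 i j + (1-lam) * (0:(Fin m → Fin n → ℝ) × ℝ).1 i j = 0
      show lam * (0:ℝ) + (1-lam) * (0:ℝ) = 0
      ring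
    · show lam * (0:(Fin m → Fin n → ℝ) × ℝ).2 + (1-lam) * (0:(Fin m → Fin n → ℝ) × ℝ).2 = 0
      show lam * (0:ℝ) + (1-lam) * (0:ℝ) = 0
      ring

lemma aux_comb_one (M M' : Menu m n K) : comb 1 M M' = M := by
  funext k
  refine Prod.ext ?_ ?_
  · funext i j; simp [comb]
  · simp [comb]

/-- The rounded-and-graded menu used in the construction. -/
noncomputable def redMenu (D : ℕ) (ν : ℝ) (M : Menu m n K) : Menu m n K :=
  fun k => (fun i j => ((min ⌊(M k).1 i j * D⌋₊ (D-1) : ℕ) : ℝ) / (D:ℝ),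
            (1 - ν) * (M k).2)

lemma aux_round_nonneg (D : ℕ) (t : ℝ) :
    0 ≤ ((min ⌊t * D⌋₊ (D-1) : ℕ) : ℝ) / (D:ℝ) := by positivity

lemma aux_round_le (D : ℕ) (hD : 0 < D) (t : ℝ) (ht : 0 ≤ t) :
    ((min ⌊t * D⌋₊ (D-1) : ℕ) : ℝ) / (D:ℝ) ≤ t := by
  rw [div_le_iff₀ (by positivity)]
  calc ((min ⌊t * D⌋₊ (D-1) : ℕ) : ℝ) ≤ (⌊t * D⌋₊ : ℕ) := by
        exact_mod_cast Nat.cast_le.mpr (Nat.min_le_left _ _)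
    _ ≤ t * D := Nat.floor_le (by positivity)

lemma aux_round_ge (D : ℕ) (hD : 0 < D) (t : ℝ) (ht : 0 ≤ t) (ht1 : t ≤ 1) :
    t - 1/(D:ℝ) ≤ ((min ⌊t * D⌋₊ (D-1) : ℕ) : ℝ) / (D:ℝ) := by
  have hDR : (0:ℝ) < D := by exact_mod_cast hD
  rw [le_div_iff₀ hDR]
  have h1 : t * D - 1 ≤ (⌊t * D⌋₊ : ℝ) := by
    linarith [Nat.lt_floor_add_one (t * D)]
  have h2 : t * D - 1 ≤ ((D - 1 : ℕ) : ℝ) := by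
    have : ((D - 1 : ℕ) : ℝ) = (D:ℝ) - 1 := by
      have : (1:ℕ) ≤ D := hD
      push_cast [Nat.cast_sub this]
      ring
    rw [this]
    nlinarith
  have hmin : t * D - 1 ≤ ((min ⌊t * D⌋₊ (D-1) : ℕ) : ℝ) := by
    rcases min_cases ⌊t * D⌋₊ (D-1) with ⟨h, -⟩ | ⟨h, -⟩ <;> rw [h]
    · exact h1
    · exact h2
  have : (t - 1/(D:ℝ)) * D = t * D - 1 := by field_simp
  rw [this]
  exact hmin

lemma aux_redMenu_isMenu (D : ℕ) (hD : 0 < D) (ν : ℝ) (M : Menu m n K)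
    (hM : IsMenu M) : IsMenu (redMenu D ν M) := by
  refine ⟨?_, ?_, ?_⟩
  · intro k i j
    constructor
    · exact aux_round_nonneg D _
    · exact le_trans (aux_round_le D hD _ (hM.1 k i j).1) (hM.1 k i j).2
  · intro k j
    calc ∑ i, (redMenu D ν M k).1 i j ≤ ∑ i, (M k).1 i j :=
          Finset.sum_le_sum (fun i _ => aux_round_le D hD _ (hM.1 k i j).1)
      _ ≤ 1 := hM.2.1 k j
  · have h := hM.2.2
    refine Prod.ext ?_ ?_
    · funext i j
      show ((min ⌊(M 0).1 i j * D⌋₊ (D-1) : ℕ) : ℝ) / (D:ℝ) = 0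
      rw [h]
      norm_num
    · show (1 - ν) * (M 0).2 = 0
      rw [h]
      norm_num

end Constr
section Reduc

variable {m n K : ℕ}

/-- Cell of an option: the rounded allocation pattern. -/
noncomputable def cellF (M : Menu m n K) (D : ℕ) (hD : 0 < D) : Fin (K+1) → Fin m → Fin n → Fin D :=
  fun k i j => ⟨min ⌊(M k).1 i j * D⌋₊ (D-1),
    Nat.lt_of_le_of_lt (Nat.min_le_right _ _) (Nat.sub_lt hD Nat.one_pos)⟩

lemma aux_cell_alloc (M : Menu m n K) (D : ℕ) (hD : 0 < D) (ν : ℝ) (k l : Fin (K+1))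
    (h : cellF M D hD k = cellF M D hD l) :
    (redMenu D ν M k).1 = (redMenu D ν M l).1 := by
  funext i j
  show ((min ⌊(M k).1 i j * D⌋₊ (D-1) : ℕ) : ℝ) / (D:ℝ)
      = ((min ⌊(M l).1 i j * D⌋₊ (D-1) : ℕ) : ℝ) / (D:ℝ)
  have := congrFun (congrFun h i) j
  have hval : min ⌊(M k).1 i j * D⌋₊ (D-1) = min ⌊(M l).1 i j * D⌋₊ (D-1) :=
    congrArg Fin.val this
  rw [hval]

lemma aux_reducible (F : Measure (Fin m → Fin n → ℝ)) [IsProbabilityMeasure F]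
    (hm : 0 < m) (M : Menu m n K) (D : ℕ) (hD : 0 < D) (ν : ℝ) (hν : ν ≤ 1)
    (hcard : ((D ^ (n*m) + 1 : ℕ) : ℝ) ≤ Real.sqrt (K+1)) :
    Reducible F (redMenu D ν M) 0 := by
  classical
  set M' := redMenu D ν M with hM'
  set f := cellF M D hD with hf
  -- representative of a cell: a β-maximal option in the cell, or 0 for empty cells
  have hrep : ∀ c : Fin m → Fin n → Fin D, ∃ r : Fin (K+1),
      (∀ k, f k = c → (f r = c ∧ (M k).2 ≤ (M r).2)) := by
    intro c
    by_cases hc : (Finset.univ.filter (fun k => f k = c)).Nonempty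
    · obtain ⟨r, hr1, hr2⟩ := Finset.exists_max_image
        (Finset.univ.filter (fun k => f k = c)) (fun k => (M k).2) hc
      refine ⟨r, fun k hk => ⟨(Finset.mem_filter.mp hr1).2, ?_⟩⟩
      exact hr2 k (Finset.mem_filter.mpr ⟨Finset.mem_univ k, hk⟩)
    · refine ⟨0, fun k hk => absurd ⟨k, Finset.mem_filter.mpr ⟨Finset.mem_univ k, hk⟩⟩ hc⟩
  choose rep hrepspec using hrep
  refine ⟨insert 0 (Finset.univ.image rep), Finset.mem_insert_self _ _, ?_, ?_⟩
  · -- cardinality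
    calc ((insert 0 (Finset.univ.image rep)).card : ℝ)
        ≤ ((Finset.univ.image rep).card + 1 : ℕ) := by
          exact_mod_cast Nat.cast_le.mpr (Finset.card_insert_le _ _)
      _ ≤ ((D ^ (n*m) + 1 : ℕ) : ℝ) := by
          have h1 : (Finset.univ.image rep).card ≤ Fintype.card (Fin m → Fin n → Fin D) :=
            le_trans (Finset.card_image_le) (by simp)
          have h2 : Fintype.card (Fin m → Fin n → Fin D) = D ^ (n*m) := by
            rw [Fintype.card_fun]
            rw [Fintype.card_fun]
            simp [pow_mul]
          have h3 : (Finset.univ.image rep).card ≤ D ^ (n*m) := h2 ▸ h1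
          exact_mod_cast Nat.add_le_add_right h3 1
      _ ≤ Real.sqrt (K+1) := hcard
  · -- probability of the good event
    have hgood : ∀ v, GoodEvent M' (insert 0 (Finset.univ.image rep)) v := by
      intro v
      have key : ∀ k, bw M' v (rep (f k)) ≥ bw M' v k ∧
          (M' (rep (f k))).1 = (M' k).1 := by
        intro k
        obtain ⟨hc, hβ⟩ := hrepspec (f k) k rfl
        have halloc : (M' (rep (f k))).1 = (M' k).1 := aux_cell_alloc M D hD ν _ k hc
        constructor
        · unfold bw
          have : ∑ i, dotp (v i) ((M' (rep (f k))).1 i) = ∑ i, dotp (v i) ((M' k).1 i) := by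
            rw [halloc]
          rw [this]
          have hb : (M' (rep (f k))).2 ≥ (M' k).2 := by
            show (1 - ν) * (M (rep (f k))).2 ≥ (1 - ν) * (M k).2
            exact mul_le_mul_of_nonneg_left hβ (by linarith)
          linarith
        · exact halloc
      constructor
      · obtain ⟨k, hk1, hk2⟩ := aux_minBeta_spec M' v
        refine ⟨rep (f k), Finset.mem_insert_of_mem (Finset.mem_image_of_mem rep (Finset.mem_univ _)), ?_, ?_⟩
        · exact le_antisymm (aux_le_W M' v _) (hk1 ▸ (key k).1)
        · have hW : bw M' v (rep (f k)) = bw M' v k :=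
            le_antisymm (hk1 ▸ aux_le_W M' v _) ((key k).1)
          have hwelf : ∑ i, dotp (v i) ((M' (rep (f k))).1 i)
              = ∑ i, dotp (v i) ((M' k).1 i) := by rw [(key k).2]
          have : (M' (rep (f k))).2 = (M' k).2 := by
            have := hW
            unfold bw at this
            linarith
          rw [this, hk2]
      · intro i
        obtain ⟨k, hk⟩ := aux_exists_WWo M' v i
        refine ⟨rep (f k), Finset.mem_insert_of_mem (Finset.mem_image_of_mem rep (Finset.mem_univ _)), ?_⟩
        have hge : bwWo M' v i (rep (f k)) ≥ bwWo M' v i k := by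
          unfold bwWo
          have : ∑ l ∈ Finset.univ.erase i, dotp (v l) ((M' (rep (f k))).1 l)
              = ∑ l ∈ Finset.univ.erase i, dotp (v l) ((M' k).1 l) := by rw [(key k).2]
          rw [this]
          obtain ⟨-, hβ⟩ := hrepspec (f k) k rfl
          have hb : (M' (rep (f k))).2 ≥ (M' k).2 := by
            show (1 - ν) * (M (rep (f k))).2 ≥ (1 - ν) * (M k).2
            exact mul_le_mul_of_nonneg_left hβ (by linarith)
          linarith
        exact le_antisymm (aux_le_WWo M' v i _) (hk ▸ hge)
    have huniv : {v | GoodEvent M' (insert 0 (Finset.univ.image rep)) v} = Set.univ :=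
      Set.eq_univ_iff_forall.mpr hgood
    rw [huniv]
    simp

end Reduc
section Key

variable {m n K : ℕ}

set_option maxHeartbeats 1000000 in
lemma aux_key (M : Menu m n K) (hM : IsMenu M) (hm : 0 < m) (D : ℕ) (hD : 0 < D)
    (ν : ℝ) (hν0 : 0 < ν) (hν1 : ν ≤ 1/2)
    (v : Fin m → Fin n → ℝ) (hv : v ∈ VP m n)
    (lam : ℝ) (hl0 : 0 ≤ lam) (hl1 : lam < 1) :
    pay (comb lam M (redMenu D ν M)) v ≥ pay M v
      - ((m:ℝ) * (((m:ℝ)/D) + ν * ((m:ℝ) + (m:ℝ)/D) / (1 - ν))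
          + ((5 * ((m:ℝ)/D)) / (2*ν) + (m:ℝ)/D)) := by
  classical
  set M' := redMenu D ν M with hM'def
  set C := comb lam M M' with hCdef
  set η := (m:ℝ)/D with hηdef
  set μ := (1-lam)*ν with hμdef
  have hmR : (1:ℝ) ≤ m := by exact_mod_cast hm
  have hDR : (0:ℝ) < D := by exact_mod_cast hD
  have hη0 : 0 < η := by rw [hηdef]; positivity
  have hμ0 : 0 ≤ μ := mul_nonneg (by linarith) (le_of_lt hν0)
  have hμν : μ ≤ ν := by
    rw [hμdef]
    have := mul_nonneg hl0 (le_of_lt hν0)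
    linarith
  have hμhalf : μ ≤ 1/2 := le_trans hμν hν1
  have h1ν : (0:ℝ) < 1 - ν := by linarith
  have hlam1 : (0:ℝ) < 1 - lam := by linarith
  -- boost of the combination
  have hB : ∀ k, (C k).2 = (1 - μ)*(M k).2 := by
    intro k
    show lam * (M k).2 + (1-lam) * ((1-ν) * (M k).2) = (1 - μ)*(M k).2
    rw [hμdef]; ring
  -- welfare of the combination over any subset of buyers
  have hA : ∀ (s : Finset (Fin m)) (k), ∑ i ∈ s, dotp (v i) ((C k).1 i)
      = lam * ∑ i ∈ s, dotp (v i) ((M k).1 i)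
        + (1-lam) * ∑ i ∈ s, dotp (v i) ((M' k).1 i) := by
    intro s k
    rw [Finset.mul_sum, Finset.mul_sum, ← Finset.sum_add_distrib]
    refine Finset.sum_congr rfl (fun i _ => ?_)
    show ∑ j, v i j * (lam * (M k).1 i j + (1-lam) * (M' k).1 i j) = _
    unfold dotp
    rw [Finset.mul_sum, Finset.mul_sum, ← Finset.sum_add_distrib]
    exact Finset.sum_congr rfl (fun j _ => by ring)
  have hM'm : IsMenu M' := aux_redMenu_isMenu D hD ν M hM
  -- rounding gap bounds
  have h_mono : ∀ (s : Finset (Fin m)) (k), ∑ i ∈ s, dotp (v i) ((M' k).1 i)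
      ≤ ∑ i ∈ s, dotp (v i) ((M k).1 i) := by
    intro s k
    apply Finset.sum_le_sum
    intro i _
    apply Finset.sum_le_sum
    intro j _
    exact mul_le_mul_of_nonneg_left (aux_round_le D hD _ (hM.1 k i j).1) ((hv i).1 j).1
  have h_gap : ∀ (s : Finset (Fin m)) (k), ∑ i ∈ s, dotp (v i) ((M k).1 i)
      ≤ ∑ i ∈ s, dotp (v i) ((M' k).1 i) + η := by
    intro s k
    have hterm : ∀ i, dotp (v i) ((M k).1 i) - dotp (v i) ((M' k).1 i) ≤ 1/D := by
      intro i
      unfold dotp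
      rw [← Finset.sum_sub_distrib]
      calc ∑ j, (v i j * (M k).1 i j - v i j * (M' k).1 i j)
          ≤ ∑ j, v i j * (1/(D:ℝ)) := by
            apply Finset.sum_le_sum
            intro j _
            have hr := aux_round_ge D hD _ (hM.1 k i j).1 (hM.1 k i j).2
            have hvij := ((hv i).1 j).1
            have hgap1 : (M k).1 i j - (M' k).1 i j ≤ 1/D := by
              show (M k).1 i j - ((min ⌊(M k).1 i j * D⌋₊ (D-1) : ℕ) : ℝ) / (D:ℝ) ≤ 1/D
              linarith
            have hx := mul_le_mul_of_nonneg_left hgap1 hvij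
            have hexp : v i j * ((M k).1 i j - (M' k).1 i j)
                = v i j * (M k).1 i j - v i j * (M' k).1 i j := by ring
            linarith [hexp ▸ hx]
        _ = (∑ j, v i j) * (1/(D:ℝ)) := by rw [Finset.sum_mul]
        _ ≤ 1 * (1/(D:ℝ)) :=
            mul_le_mul_of_nonneg_right (hv i).2 (by positivity)
        _ = 1/(D:ℝ) := by ring
    have hsum : ∑ i ∈ s, dotp (v i) ((M k).1 i) - ∑ i ∈ s, dotp (v i) ((M' k).1 i)
        ≤ s.card * (1/(D:ℝ)) := by
      rw [← Finset.sum_sub_distrib]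
      calc ∑ i ∈ s, (dotp (v i) ((M k).1 i) - dotp (v i) ((M' k).1 i))
          ≤ ∑ _i ∈ s, (1/(D:ℝ)) := Finset.sum_le_sum (fun i _ => hterm i)
        _ = s.card * (1/(D:ℝ)) := by rw [Finset.sum_const, nsmul_eq_mul]
    have hcard : (s.card : ℝ) ≤ m := by
      exact_mod_cast Nat.cast_le.mpr (le_trans (Finset.card_le_card (Finset.subset_univ s))
        (le_of_eq (by simp)))
    have hfin : (s.card : ℝ) * (1/(D:ℝ)) ≤ η := by
      rw [hηdef]
      calc (s.card : ℝ) * (1/(D:ℝ)) ≤ (m:ℝ) * (1/(D:ℝ)) :=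
            mul_le_mul_of_nonneg_right hcard (by positivity)
        _ = (m:ℝ)/D := by ring
    linarith
  have hw_le := fun k => aux_welf_le M hM v hv k Finset.univ
  -- bw of C in terms of components
  have hbwC : ∀ k, bw C v k = (lam * ∑ i, dotp (v i) ((M k).1 i)
      + (1-lam) * ∑ i, dotp (v i) ((M' k).1 i)) + (1-μ)*(M k).2 := by
    intro k
    unfold bw
    rw [hA Finset.univ k, hB k]
  have hbwWoC : ∀ i k, bwWo C v i k = (lam * ∑ l ∈ Finset.univ.erase i, dotp (v l) ((M k).1 l)
      + (1-lam) * ∑ l ∈ Finset.univ.erase i, dotp (v l) ((M' k).1 l)) + (1-μ)*(M k).2 := by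
    intro i k
    unfold bwWo
    rw [hA (Finset.univ.erase i) k, hB k]
  have hbwM : ∀ k, bw M v k = (∑ i, dotp (v i) ((M k).1 i)) + (M k).2 := fun _ => rfl
  have hbwWoM : ∀ i k, bwWo M v i k
      = (∑ l ∈ Finset.univ.erase i, dotp (v l) ((M k).1 l)) + (M k).2 := fun _ _ => rfl
  -- STEP 1 : per-buyer comparison
  have step1 : ∀ i, WWo C v i - W C v ≥ WWo M v i - W M v - (η + ν * ((m:ℝ)+η) / (1-ν)) := by
    intro i
    obtain ⟨q, hq⟩ := aux_exists_W C v
    obtain ⟨p, hp⟩ := aux_exists_WWo M v i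
    have hmono_q := mul_le_mul_of_nonneg_left (h_mono Finset.univ q) (le_of_lt hlam1)
    have hq_ub : W C v ≤ W M v - μ * (M q).2 := by
      rw [← hq, hbwC q]
      have h1 : bw M v q ≤ W M v := aux_le_W M v q
      rw [hbwM q] at h1
      linarith
    have ha1 : WWo C v i ≥ WWo M v i - η - μ * (M p).2 := by
      have h1 : bwWo C v i p ≤ WWo C v i := aux_le_WWo C v i p
      rw [hbwWoC i p] at h1
      have h2 := h_gap (Finset.univ.erase i) p
      have h3 : bwWo M v i p = WWo M v i := hp
      rw [hbwWoM i p] at h3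
      have hx := mul_le_mul_of_nonneg_left
        (show (∑ l ∈ Finset.univ.erase i, dotp (v l) ((M p).1 l))
          - (∑ l ∈ Finset.univ.erase i, dotp (v l) ((M' p).1 l)) ≤ η by linarith)
        (le_of_lt hlam1)
      have hlη := mul_nonneg hl0 (le_of_lt hη0)
      linarith
    have ha3 : (M p).2 ≤ WWo M v i := by
      have h3 : bwWo M v i p = WWo M v i := hp
      rw [hbwWoM i p] at h3
      have := aux_welf_nonneg M hM v hv p (Finset.univ.erase i)
      linarith
    have ha4 : (1-μ) * (M q).2 ≥ WWo M v i - μ * (M p).2 - η - m := by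
      have h1 : bw C v p ≤ W C v := aux_le_W C v p
      rw [← hq, hbwC p, hbwC q] at h1
      have h2 := h_gap Finset.univ p
      have h3 : bwWo M v i p = WWo M v i := hp
      rw [hbwWoM i p] at h3
      have h4 : ∑ l ∈ Finset.univ.erase i, dotp (v l) ((M p).1 l)
          ≤ ∑ l, dotp (v l) ((M p).1 l) := by
        apply Finset.sum_le_sum_of_subset_of_nonneg (Finset.subset_univ _)
        intro l _ _
        apply Finset.sum_nonneg
        intro j _
        exact mul_nonneg ((hv l).1 j).1 (hM.1 p l j).1
      have h5 : lam * ∑ i, dotp (v i) ((M q).1 i)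
          + (1-lam) * ∑ i, dotp (v i) ((M' q).1 i) ≤ m := by
        linarith [hw_le q]
      have hx := mul_le_mul_of_nonneg_left
        (show (∑ i, dotp (v i) ((M p).1 i)) - (∑ i, dotp (v i) ((M' p).1 i)) ≤ η by linarith)
        (le_of_lt hlam1)
      have hlη := mul_nonneg hl0 (le_of_lt hη0)
      linarith
    have ha5 : μ * ((M q).2 - (M p).2) ≥ -(ν * ((m:ℝ)+η) / (1-ν)) := by
      have hmη : (0:ℝ) ≤ (m:ℝ) + η := by positivity
      have hAq' : -((m:ℝ)+η) ≤ (1-μ) * ((M q).2 - (M p).2) := by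
        have hexp : (1-μ) * ((M q).2 - (M p).2) = (1-μ)*(M q).2 - (M p).2 + μ*(M p).2 := by ring
        linarith
      rcases le_or_gt 0 ((M q).2 - (M p).2) with ht | ht
      · have hx1 : 0 ≤ μ * ((M q).2 - (M p).2) := mul_nonneg hμ0 ht
        have hx2 : 0 ≤ ν * ((m:ℝ)+η) / (1-ν) := by positivity
        linarith
      · rw [ge_iff_le, neg_le, le_div_iff₀ h1ν]
        have f1 := mul_le_mul_of_nonneg_left hAq' (le_of_lt hν0)
        have f2 : 0 ≤ (ν-μ) * (-((M q).2 - (M p).2)) :=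
          mul_nonneg (by linarith) (by linarith)
        nlinarith [f1, f2]
    have hkey : (WWo M v i - η - μ * (M p).2) - (W M v - μ * (M q).2)
        = WWo M v i - W M v - η + μ * ((M q).2 - (M p).2) := by ring
    linarith
  -- STEP 2 : welfare of the chosen maximizer
  have step2 : (W C v - minBeta C v) ≥ (W M v - minBeta M v) - ((5*η)/(2*ν) + η) := by
    obtain ⟨ks, hks1, hks2⟩ := aux_minBeta_spec M v
    obtain ⟨kb, hkb1, hkb2⟩ := aux_minBeta_spec C v
    set ws := ∑ i, dotp (v i) ((M ks).1 i) with hws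
    set wb := ∑ i, dotp (v i) ((M kb).1 i) with hwb
    set wb' := ∑ i, dotp (v i) ((M' kb).1 i) with hwb'
    set ws' := ∑ i, dotp (v i) ((M' ks).1 i) with hws'
    have hWphi : W M v - minBeta M v = ws := by
      have h := hks1
      rw [hbwM ks] at h
      rw [← hks2]
      linarith
    have hWphiC : W C v - minBeta C v = lam * wb + (1-lam) * wb' := by
      have h := hkb1
      rw [hbwC kb] at h
      rw [← hkb2, hB kb]
      linarith
    have hgb : wb - η ≤ wb' := by have := h_gap Finset.univ kb; linarith
    have hclaim : wb ≥ ws - (5*η)/(2*ν) := by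
      by_contra hcon
      push_neg at hcon
      have hAx : bw C v ks ≤ bw C v kb := by
        rw [hkb1]; exact aux_le_W C v ks
      rw [hbwC ks, hbwC kb] at hAx
      have hb1 : wb + (M kb).2 ≤ W M v := by
        have h := aux_le_W M v kb
        rw [hbwM kb] at h
        linarith
      have hb2 : ws + (M ks).2 = W M v := by
        have h := hks1
        rw [hbwM ks] at h
        linarith
      have hg1 : ws - η ≤ ws' := by have := h_gap Finset.univ ks; linarith
      have hg2 : wb' ≤ wb := h_mono Finset.univ kb
      -- auxiliary products
      have hx3 : (1-μ) * (M kb).2 ≤ (1-μ) * (W M v - wb) :=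
        mul_le_mul_of_nonneg_left (by linarith) (by linarith)
      have hx4 : (1-μ) * (M ks).2 = (1-μ) * (W M v - ws) := by
        have : (M ks).2 = W M v - ws := by linarith
        rw [this]
      have hx5 : (1-lam) * (ws - η) ≤ (1-lam) * ws' :=
        mul_le_mul_of_nonneg_left hg1 (le_of_lt hlam1)
      have hx6 : (1-lam) * wb' ≤ (1-lam) * wb :=
        mul_le_mul_of_nonneg_left hg2 (le_of_lt hlam1)
      have hlin : μ * (ws - wb) ≤ (1-lam) * η := by nlinarith [hAx, hx3, hx4, hx5, hx6]
      have hνws : ν * (ws - wb) ≤ η := by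
        have h' : (1-lam) * (ν * (ws - wb)) ≤ (1-lam) * η := by
          rw [← mul_assoc, ← hμdef]
          exact hlin
        exact le_of_mul_le_mul_left h' hlam1
      have hcon2 : (5*η)/(2*ν) < ws - wb := by linarith
      have hlt := (mul_lt_mul_iff_right₀ hν0).mpr hcon2
      have hx : ν * (5*η/(2*ν)) = 5*η/2 := by
        field_simp
      rw [hx] at hlt
      linarith
    have hx7 : (1-lam) * (wb - η) ≤ (1-lam) * wb' :=
      mul_le_mul_of_nonneg_left hgb (le_of_lt hlam1)
    have hlη := mul_nonneg hl0 (le_of_lt hη0)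
    have hfin : lam * wb + (1-lam) * wb' ≥ wb - η := by nlinarith [hx7]
    rw [hWphiC, hWphi]
    have hdiv0 : 0 < 2*ν := by linarith
    linarith
  -- STEP 3 : combine
  rw [aux_pay_eq C v, aux_pay_eq M v]
  have hsum : ∑ i, (WWo C v i - W C v)
      ≥ ∑ i, (WWo M v i - W M v) - (m:ℝ) * (η + ν * ((m:ℝ)+η) / (1-ν)) := by
    have h1 : ∑ i, (WWo M v i - W M v) - ∑ i, (WWo C v i - W C v)
        = ∑ i, ((WWo M v i - W M v) - (WWo C v i - W C v)) :=
      (Finset.sum_sub_distrib _ _).symm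
    have h2 : ∑ i, ((WWo M v i - W M v) - (WWo C v i - W C v))
        ≤ ∑ _i : Fin m, (η + ν * ((m:ℝ)+η) / (1-ν)) := by
      apply Finset.sum_le_sum
      intro i _
      have := step1 i
      linarith
    have h3 : ∑ _i : Fin m, (η + ν * ((m:ℝ)+η) / (1-ν))
        = (m:ℝ) * (η + ν * ((m:ℝ)+η) / (1-ν)) := by
      rw [Finset.sum_const, Finset.card_univ, Fintype.card_fin, nsmul_eq_mul]
    linarith
  linarith [step2, hsum]

end Key
section Arith

set_option maxHeartbeats 1000000 in
lemma aux_arith (mR ε η ν : ℝ) (hm : 1 ≤ mR) (hε0 : 0 < ε) (hε4 : ε ≤ 1/4)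
    (hη0 : 0 < η) (hη : η ≤ (16/255)*ε^2/mR^2) (hνdef : ν = 15*η/(4*ε)) :
    0 < ν ∧ ν ≤ 1/2 ∧ mR * (η + ν*(mR + η)/(1-ν)) + (5*η/(2*ν) + η) ≤ ε := by
  have hmR0 : (0:ℝ) < mR := by linarith
  have hε2 : ε^2 ≤ ε/4 := by nlinarith
  have hmR2 : 1 ≤ mR^2 := by nlinarith
  have hν0 : 0 < ν := by rw [hνdef]; positivity
  have hηε : η ≤ (16/255)*ε^2 := le_trans hη (div_le_self (by positivity) hmR2)
  have hη255 : η ≤ 1/255 := by nlinarith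
  have hνm : ν ≤ (4/17)*ε/mR^2 := by
    rw [hνdef, div_le_div_iff₀ (by positivity) (by positivity)]
    have h1 : 15*η ≤ 15*((16/255)*ε^2/mR^2) := by linarith
    have h2 : 15*((16/255)*ε^2/mR^2)*mR^2 = (16/17)*ε^2 := by field_simp; ring
    have h4 := mul_le_mul_of_nonneg_right h1 (by positivity : (0:ℝ) ≤ mR^2)
    nlinarith [h4]
  have hνε : ν ≤ (4/17)*ε := le_trans hνm (div_le_self (by positivity) hmR2)
  have hν17 : ν ≤ 1/17 := by nlinarith
  have hν2 : ν ≤ 1/2 := by linarith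
  refine ⟨hν0, hν2, ?_⟩
  have hγ : 5*η/(2*ν) = 2*ε/3 := by
    rw [hνdef]
    rw [div_eq_iff (by positivity : (2*(15*η/(4*ε))) ≠ 0)]
    field_simp
    ring
  rw [hγ]
  have h1ν : (16:ℝ)/17 ≤ 1 - ν := by linarith
  have hmη : mR + η ≤ (256/255)*mR := by nlinarith
  have hνmR2 : ν*mR^2 ≤ (4/17)*ε := by
    have h1 := mul_le_mul_of_nonneg_right hνm (by positivity : (0:ℝ) ≤ mR^2)
    have h2 : ((4/17)*ε/mR^2)*mR^2 = (4/17)*ε := by field_simp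
    linarith
  have hA : ν*(mR+η)/(1-ν) ≤ (272/255)*(ν*mR) := by
    rw [div_le_iff₀ (by linarith : (0:ℝ) < 1-ν)]
    have hx0 : (0:ℝ) ≤ ν*mR := mul_nonneg hν0.le hmR0.le
    have f1 := mul_le_mul_of_nonneg_left hmη hν0.le
    have f3 := mul_le_mul_of_nonneg_left h1ν
      (by positivity : (0:ℝ) ≤ (272/255)*(ν*mR))
    nlinarith [f1, f3]
  have hterm2 : mR*(ν*(mR+η)/(1-ν)) ≤ (64/255)*ε := by
    have h1 : mR*(ν*(mR+η)/(1-ν)) ≤ mR*((272/255)*(ν*mR)) :=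
      mul_le_mul_of_nonneg_left hA (by positivity)
    nlinarith [hνmR2, h1]
  have hterm1 : mR*η ≤ (4/255)*ε := by
    have h1 : mR*η ≤ mR*((16/255)*ε^2/mR^2) := mul_le_mul_of_nonneg_left hη (by positivity)
    have h2 : mR*((16/255)*ε^2/mR^2) = (16/255)*ε^2/mR := by field_simp
    have h3 : (16/255)*ε^2/mR ≤ (16/255)*ε^2 := div_le_self (by positivity) hm
    linarith
  have hterm4 : η ≤ (4/255)*ε := by linarith
  have hexp : mR * (η + ν*(mR + η)/(1-ν)) = mR*η + mR*(ν*(mR+η)/(1-ν)) := by ring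
  linarith

end Arith
/-- For `0 < ε ≤ 1/4` and any AMA menu `M₁` with
`K + 1 ≥ ⌈16 m³ / ε²⌉^(2 n m)` options, there is a `0`-reducible AMA menu `M₁'` on the
same index set such that every convex combination of `M₁` and `M₁'` has revenue at
least `Rev M₁ - ε`. -/
theorem statement16 {m n K : ℕ} (hm : 0 < m) (F : Measure (Fin m → Fin n → ℝ))
    [IsProbabilityMeasure F] (hFV : F (VP m n) = 1)
    (ε : ℝ) (hε0 : 0 < ε) (hε4 : ε ≤ 1 / 4)
    (hK : ⌈16 * (m : ℝ) ^ 3 / ε ^ 2⌉₊ ^ (2 * n * m) ≤ K + 1)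
    (M₁ : Menu m n K) (hM₁ : IsMenu M₁) :
    ∃ M₁' : Menu m n K, IsMenu M₁' ∧ Reducible F M₁' 0 ∧
      ∀ lam ∈ Set.Icc (0 : ℝ) 1, Rev F (comb lam M₁ M₁') ≥ Rev F M₁ - ε := by
  classical
  rcases Nat.eq_zero_or_pos n with hn | hn
  · -- degenerate case: no items, every menu has zero payment
    subst hn
    refine ⟨(fun _ => 0), ⟨fun k i j => j.elim0, fun k j => j.elim0, rfl⟩, ?_, ?_⟩
    · set M0 : Menu m 0 K := fun _ => 0 with hM0
      have hbw : ∀ v k, bw M0 v k = 0 := by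
        intro v k; unfold bw dotp; simp [hM0]
      have hbwWo : ∀ v i k, bwWo M0 v i k = 0 := by
        intro v i k; unfold bwWo dotp; simp [hM0]
      have hW : ∀ v, W M0 v = 0 := by
        intro v
        rw [W, Finset.sup'_congr _ rfl (fun k _ => hbw v k), Finset.sup'_const]
      have hWWo : ∀ v i, WWo M0 v i = 0 := by
        intro v i
        rw [WWo, Finset.sup'_congr _ rfl (fun k _ => hbwWo v i k), Finset.sup'_const]
      have hmb : ∀ v, minBeta M0 v = 0 := by
        intro v
        obtain ⟨k, -, hk2⟩ := aux_minBeta_spec M0 v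
        rw [← hk2]; rfl
      refine ⟨{0}, Finset.mem_singleton_self 0, ?_, ?_⟩
      · have h1 : (({0} : Finset (Fin (K+1))).card : ℝ) = 1 := by simp
        rw [h1]
        have h2 := Real.sqrt_le_sqrt (show (1:ℝ) ≤ (K:ℝ)+1 by
          have := Nat.cast_nonneg (α := ℝ) K; linarith)
        rwa [Real.sqrt_one] at h2
      · have hgood : ∀ v, GoodEvent M0 {0} v := by
          intro v
          constructor
          · exact ⟨0, Finset.mem_singleton_self 0, by rw [hbw, hW], by rw [hmb]; rfl⟩
          · intro i
            exact ⟨0, Finset.mem_singleton_self 0, by rw [hbwWo, hWWo]⟩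
        have : {v | GoodEvent M0 {0} v} = Set.univ := Set.eq_univ_iff_forall.mpr hgood
        rw [this]
        simp
    · intro lam hlam
      have h0 : ∀ (M : Menu m 0 K), Rev F M = 0 := by
        intro M; unfold Rev; simp [aux_pay_n0]
      rw [h0, h0]
      linarith
  · -- main case
    have hmR : (1:ℝ) ≤ m := by exact_mod_cast hm
    set N := ⌈16 * (m : ℝ) ^ 3 / ε ^ 2⌉₊ with hNdef
    have hNge : 16 * (m : ℝ)^3 / ε^2 ≤ N := Nat.le_ceil _
    have hm3 : (1:ℝ) ≤ (m:ℝ)^3 := one_le_pow₀ hmR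
    have hε2 : ε^2 ≤ 1/16 := by nlinarith
    have h256 : (256:ℝ) ≤ 16 * (m:ℝ)^3 / ε^2 := by
      rw [le_div_iff₀ (by positivity)]
      nlinarith
    have hN256 : 256 ≤ N := by
      have : (256:ℝ) ≤ (N:ℝ) := le_trans h256 hNge
      exact_mod_cast this
    set D := N - 1 with hDdef
    have hDpos : 0 < D := by omega
    have hDR : (0:ℝ) < D := by exact_mod_cast hDpos
    have hDcast : (D:ℝ) = (N:ℝ) - 1 := by
      rw [hDdef]
      have h1 : (1:ℕ) ≤ N := by omega
      push_cast [Nat.cast_sub h1]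
      ring
    have hDge : (255/16) * ((m:ℝ)^3/ε^2) ≤ (D:ℝ) := by
      rw [hDcast]
      have hXeq : (255/256)*(16*(m:ℝ)^3/ε^2) = (255/16)*((m:ℝ)^3/ε^2) := by ring
      linarith
    have hη0 : 0 < (m:ℝ)/(D:ℝ) := by positivity
    have hηle : (m:ℝ)/(D:ℝ) ≤ (16/255)*ε^2/(m:ℝ)^2 := by
      rw [div_le_iff₀ hDR]
      have hc : (16/255)*ε^2/(m:ℝ)^2 * ((255/16)*((m:ℝ)^3/ε^2)) = (m:ℝ) := by
        field_simp
      have hmono := mul_le_mul_of_nonneg_left hDge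
        (by positivity : (0:ℝ) ≤ (16/255)*ε^2/(m:ℝ)^2)
      linarith [hc ▸ hmono]
    obtain ⟨hν0, hν2, harith⟩ := aux_arith (m:ℝ) ε ((m:ℝ)/(D:ℝ))
      (15*((m:ℝ)/(D:ℝ))/(4*ε)) hmR hε0 hε4 hη0 hηle rfl
    set ν := 15*((m:ℝ)/(D:ℝ))/(4*ε) with hνdef
    have hM₁' := aux_redMenu_isMenu D hDpos ν M₁ hM₁
    refine ⟨redMenu D ν M₁, hM₁', ?_, ?_⟩
    · -- reducibility
      apply aux_reducible F hm M₁ D hDpos ν (by linarith)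
      have hq : n*m ≠ 0 := by
        have := Nat.mul_pos hn hm
        omega
      have hDN : D < N := by omega
      have h1 : D^(n*m) + 1 ≤ N^(n*m) := Nat.succ_le_of_lt (Nat.pow_lt_pow_left hDN hq)
      have h2 : (N^(n*m))^2 ≤ K + 1 := by
        have he : n*m*2 = 2*n*m := by ring
        rw [← pow_mul, he]
        exact hK
      calc ((D^(n*m)+1 : ℕ):ℝ) ≤ ((N^(n*m) : ℕ):ℝ) := by exact_mod_cast h1
        _ = Real.sqrt ((((N^(n*m)):ℕ):ℝ)^2) := (Real.sqrt_sq (by positivity)).symm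
        _ ≤ Real.sqrt ((K:ℝ)+1) := by
            apply Real.sqrt_le_sqrt
            have : (((N^(n*m))^2 : ℕ):ℝ) ≤ ((K+1 : ℕ):ℝ) := by exact_mod_cast h2
            push_cast at this ⊢
            linarith
    · -- revenue
      intro lam hlam
      rcases eq_or_lt_of_le hlam.2 with heq | hlt
      · rw [heq, aux_comb_one]
        linarith
      · have hC : IsMenu (comb lam M₁ (redMenu D ν M₁)) :=
          aux_comb_isMenu lam hlam.1 hlam.2 _ _ hM₁ hM₁'
        have hint1 := aux_integrable_pay F hFV M₁ hM₁
        have hint2 := aux_integrable_pay F hFV _ hC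
        have hae : ∀ᵐ v ∂F, pay M₁ v - ε ≤ pay (comb lam M₁ (redMenu D ν M₁)) v := by
          filter_upwards [aux_ae_VP F hFV] with v hv
          have hkey := aux_key M₁ hM₁ hm D hDpos ν hν0 hν2 v hv lam hlam.1 hlt
          rw [hνdef] at harith
          linarith [hkey, harith]
        have h3 : ∫ v, (pay M₁ v - ε) ∂F
            ≤ ∫ v, pay (comb lam M₁ (redMenu D ν M₁)) v ∂F :=
          MeasureTheory.integral_mono_ae
            (hint1.sub (MeasureTheory.integrable_const ε)) hint2 hae
        have h4 : ∫ v, (pay M₁ v - ε) ∂F = (∫ v, pay M₁ v ∂F) - ε := by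
          rw [MeasureTheory.integral_sub hint1 (MeasureTheory.integrable_const ε),
            MeasureTheory.integral_const]
          simp
        unfold Rev
        linarith

end AMA
end
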